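/- Let q be a prime and let r ≥ s ≥ 1. If 𝒜 is a family of s-element subsets of {1,…,r} such that |A∩B| ≢ s (mod q) for every pair of distinct A, B ∈ 𝒜, then |𝒜| ≤ ∑_{i=0}^{q-1} C(r,i). -/

import Mathlib

open Finset

/-- Alternating-sign inverse binomial transform identity over `ℤ`. -/
private lemma fw_int_identity (q u n : ℕ) (hn : n < q) :
    (∑ k ∈ Finset.range q, (-1:ℤ)^(k+u) * (k.choose u) * (n.choose k))
      = if n = u then 1 else 0 := by
  have h1 : (∑ k ∈ Finset.range q, (-1:ℤ)^(k+u) * (k.choose u) * (n.choose k))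
      = ∑ k ∈ Finset.range (n+1), (-1:ℤ)^(k+u) * (k.choose u) * (n.choose k) := by
    rw [Finset.sum_subset (Finset.range_subset_range.mpr hn)]
    intro k _ hk
    simp only [Finset.mem_range, not_lt] at hk
    have : n.choose k = 0 := Nat.choose_eq_zero_of_lt (by omega)
    simp [this]
  rw [h1]
  by_cases hun : u ≤ n
  · have h2 : (∑ k ∈ Finset.range (n+1), (-1:ℤ)^(k+u) * (k.choose u) * (n.choose k))
        = ∑ k ∈ Finset.Ico u (n+1), (-1:ℤ)^(k+u) * (k.choose u) * (n.choose k) := by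
      refine (Finset.sum_subset ?_ ?_).symm
      · intro k hk; exact Finset.mem_range.mpr (Finset.mem_Ico.mp hk).2
      · intro k hk1 hk2
        rw [Finset.mem_Ico, not_and_or, not_le] at hk2
        have hku : k < u := by
          rcases hk2 with h | h
          · exact h
          · exact absurd (Finset.mem_range.mp hk1) h
        have : k.choose u = 0 := Nat.choose_eq_zero_of_lt hku
        simp [this]
    rw [h2, Finset.sum_Ico_eq_sum_range]
    have h3 : ∀ j ∈ Finset.range (n + 1 - u),
        (-1:ℤ)^(u+j+u) * ((u+j).choose u) * (n.choose (u+j))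
          = (n.choose u : ℤ) * ((-1:ℤ)^j * ((n-u).choose j)) := by
      intro j hj
      have hjn : u + j ≤ n := by
        have := Finset.mem_range.mp hj; omega
      have hcm : n.choose (u+j) * (u+j).choose u = n.choose u * (n-u).choose (u+j-u) :=
        Nat.choose_mul (Nat.le_add_right u j)
      have hsub : u + j - u = j := by omega
      rw [hsub] at hcm
      have hsign : (-1:ℤ)^(u+j+u) = (-1:ℤ)^j := by
        have : u + j + u = j + 2*u := by omega
        rw [this, pow_add, pow_mul, neg_one_sq, one_pow, mul_one]
      rw [hsign]
      have hcast : ((u+j).choose u : ℤ) * (n.choose (u+j)) = (n.choose u : ℤ) * ((n-u).choose j) := by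
        rw [mul_comm]; exact_mod_cast hcm
      linear_combination (-1:ℤ)^j * hcast
    rw [Finset.sum_congr rfl h3, ← Finset.mul_sum]
    have h4 : n + 1 - u = (n - u) + 1 := by omega
    rw [h4, Int.alternating_sum_range_choose]
    by_cases hnu : n = u
    · subst hnu; simp
    · have : ¬ (n - u = 0) := by omega
      simp [this, hnu]
  · have hz : ∀ k ∈ Finset.range (n+1), (-1:ℤ)^(k+u) * (k.choose u) * (n.choose k) = 0 := by
      intro k hk
      have : k.choose u = 0 := Nat.choose_eq_zero_of_lt (by
        have := Finset.mem_range.mp hk; omega)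
      simp [this]
    rw [Finset.sum_eq_zero hz]
    have : ¬ (n = u) := by omega
    simp [this]

/-- Corollary of Lucas' theorem: for `k < q`, `C(n,k) ≡ C(n % q, k) (mod q)`. -/
private lemma fw_lucas (q : ℕ) [Fact q.Prime] (k n : ℕ) (hk : k < q) :
    ((n.choose k : ZMod q)) = (((n % q).choose k : ZMod q)) := by
  have h := Choose.choose_modEq_choose_mod_mul_choose_div (p := q) (n := n) (k := k)
  rw [Nat.mod_eq_of_lt hk, Nat.div_eq_of_lt hk, Nat.choose_zero_right] at h
  have h2 := (ZMod.intCast_eq_intCast_iff _ _ _).mpr h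
  push_cast at h2 ⊢
  simpa using h2

/-- The indicator of `n ≡ u (mod q)` as a linear combination of binomial coefficients. -/
private lemma fw_indicator (q : ℕ) [Fact q.Prime] (u n : ℕ) (hu : u < q) :
    (if n % q = u then (1 : ZMod q) else 0)
      = ∑ k ∈ Finset.range q, (-1 : ZMod q)^(k+u) * (k.choose u) * (n.choose k) := by
  have hq : 0 < q := (Fact.out : q.Prime).pos
  have h1 : ∀ k ∈ Finset.range q,
      (-1 : ZMod q)^(k+u) * (k.choose u) * (n.choose k)
        = (-1 : ZMod q)^(k+u) * (k.choose u) * ((n % q).choose k) := by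
    intro k hk
    rw [fw_lucas q k n (Finset.mem_range.mp hk)]
  rw [Finset.sum_congr rfl h1]
  have h2 := fw_int_identity q u (n % q) (Nat.mod_lt n hq)
  have h3 := congrArg (fun z : ℤ => (z : ZMod q)) h2
  push_cast at h3
  rw [← h3]

/-- Let `q` be a prime and `r ≥ s ≥ 1`. If `𝒜` is a family of `s`-element subsets of
`{1, …, r}` such that `|A ∩ B| ≢ s (mod q)` for all distinct `A, B ∈ 𝒜`, then
`|𝒜| ≤ ∑_{i = 0}^{q - 1} C(r, i)`. -/
theorem card_le_sum_choose_of_card_inter_not_modEq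
    (q r s : ℕ) (hq : q.Prime) (hs : 1 ≤ s) (hsr : s ≤ r)
    (𝒜 : Finset (Finset (Fin r)))
    (hcard : ∀ A ∈ 𝒜, A.card = s)
    (hmod : ∀ A ∈ 𝒜, ∀ B ∈ 𝒜, A ≠ B → ¬ (A ∩ B).card ≡ s [MOD q]) :
    𝒜.card ≤ ∑ i ∈ Finset.range q, r.choose i := by
  haveI : Fact q.Prime := ⟨hq⟩
  have hu : s % q < q := Nat.mod_lt s hq.pos
  -- indicator functions of "contains S"
  set e : Finset (Fin r) → (Finset (Fin r) → ZMod q) := fun S B => if S ⊆ B then 1 else 0 with he_def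
  set T : Finset (Finset (Fin r)) :=
    (Finset.univ : Finset (Finset (Fin r))).filter (fun S => S.card < q) with hT_def
  set W := Submodule.span (ZMod q) ((T.image e : Finset _) :
    Set (Finset (Fin r) → ZMod q)) with hW_def
  -- the family of indicator-of-congruence functions
  set f : 𝒜 → (Finset (Fin r) → ZMod q) := fun A B => if ((A : Finset (Fin r)) ∩ B).card % q = s % q then 1 else 0
    with hf_def
  -- each f A lies in W
  have hmem : ∀ A : 𝒜, f A ∈ W := by
    intro A
    have hexp : f A = ∑ k ∈ Finset.range q,
        ((-1 : ZMod q)^(k+(s % q)) * (k.choose (s % q))) •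
          (∑ S ∈ Finset.powersetCard k (A : Finset (Fin r)), e S) := by
      funext B
      have hcount : ∀ k, ((((A : Finset (Fin r)) ∩ B).card).choose k : ZMod q)
          = ∑ S ∈ Finset.powersetCard k (A : Finset (Fin r)), e S B := by
        intro k
        have hps : Finset.powersetCard k ((A : Finset (Fin r)) ∩ B)
            = (Finset.powersetCard k (A : Finset (Fin r))).filter (fun S => S ⊆ B) := by
          ext S
          simp only [Finset.mem_powersetCard, Finset.mem_filter, Finset.subset_inter_iff]
          tauto
        have hcardps := Finset.card_powersetCard k ((A : Finset (Fin r)) ∩ B)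
        rw [hps] at hcardps
        simp only [he_def]
        rw [Finset.sum_boole, hcardps]
      have := fw_indicator q (s % q) (((A : Finset (Fin r)) ∩ B).card) hu
      simp only [hf_def]
      rw [this]
      rw [Finset.sum_apply]
      refine Finset.sum_congr rfl ?_
      intro k _
      rw [Pi.smul_apply, smul_eq_mul, Finset.sum_apply, ← hcount k, mul_assoc]
    rw [hexp]
    refine Submodule.sum_mem _ ?_
    intro k hk
    refine Submodule.smul_mem _ _ (Submodule.sum_mem _ ?_)
    intro S hS
    refine Submodule.subset_span ?_
    simp only [Finset.coe_image, Set.mem_image, Finset.mem_coe]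
    refine ⟨S, ?_, rfl⟩
    rw [hT_def, Finset.mem_filter]
    refine ⟨Finset.mem_univ _, ?_⟩
    rw [(Finset.mem_powersetCard.mp hS).2]
    exact Finset.mem_range.mp hk
  -- the family is linearly independent
  have hli : LinearIndependent (ZMod q) f := by
    rw [Fintype.linearIndependent_iff]
    intro g hg A₀
    have hA₀ := congrFun hg (A₀ : Finset (Fin r))
    rw [Finset.sum_apply] at hA₀
    have hsingle : ∀ B : 𝒜, B ≠ A₀ → (g B • f B) (A₀ : Finset (Fin r)) = 0 := by
      intro B hB
      have hne : (B : Finset (Fin r)) ≠ (A₀ : Finset (Fin r)) := by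
        intro h; exact hB (Subtype.ext h)
      have := hmod B B.2 A₀ A₀.2 hne
      rw [Nat.ModEq] at this
      simp only [hf_def, Pi.smul_apply, smul_eq_mul]
      rw [if_neg this, mul_zero]
    have hdiag : (g A₀ • f A₀) (A₀ : Finset (Fin r)) = g A₀ := by
      simp only [hf_def, Pi.smul_apply, smul_eq_mul]
      rw [Finset.inter_self, hcard _ A₀.2, if_pos rfl, mul_one]
    rw [Finset.sum_eq_single A₀ (fun B _ hB => hsingle B hB)
      (fun h => absurd (Finset.mem_univ A₀) h), hdiag] at hA₀
    exact hA₀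
  -- count
  have hdim : Fintype.card 𝒜 ≤ Module.finrank (ZMod q) W := by
    have h1 := linearIndependent_iff_card_le_finrank_span.mp hli
    have h2 : Submodule.span (ZMod q) (Set.range f) ≤ W := by
      rw [Submodule.span_le]
      rintro _ ⟨A, rfl⟩
      exact hmem A
    exact h1.trans (Submodule.finrank_mono h2)
  have hWle : Module.finrank (ZMod q) W ≤ T.card := by
    refine le_trans ?_ (Finset.card_image_le (f := e))
    exact finrank_span_finset_le_card (T.image e)
  have hT : T.card = ∑ i ∈ Finset.range q, r.choose i := by
    have hT2 : T = (Finset.range q).biUnion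
        (fun i => Finset.powersetCard i (Finset.univ : Finset (Fin r))) := by
      ext S
      simp only [hT_def, Finset.mem_filter, Finset.mem_univ, true_and, Finset.mem_biUnion,
        Finset.mem_range, Finset.mem_powersetCard]
      constructor
      · intro h; exact ⟨S.card, h, Finset.subset_univ _, rfl⟩
      · rintro ⟨i, hi, -, rfl⟩; exact hi
    rw [hT2, Finset.card_biUnion]
    · refine Finset.sum_congr rfl ?_
      intro i _
      rw [Finset.card_powersetCard, Finset.card_univ, Fintype.card_fin]
    · intro i _ j _ hij
      refine Finset.disjoint_left.mpr ?_
      intro S hS hS'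
      rw [Finset.mem_powersetCard] at hS hS'
      exact hij (hS.2 ▸ hS'.2 ▸ rfl)
  calc 𝒜.card = Fintype.card 𝒜 := (Fintype.card_coe 𝒜).symm
    _ ≤ Module.finrank (ZMod q) W := hdim
    _ ≤ T.card := hWle
    _ = ∑ i ∈ Finset.range q, r.choose i := hT
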